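/- Let s < T be real numbers, let γ ∈ (1/2, 1], and let x : [s, T] → ℝ be Hölder continuous of exponent γ, i.e. there is C ≥ 0 with |x(u) − x(v)| ≤ C|u − v|^γ for all u, v ∈ [s, T]. Then for every sequence of partitions s = t_0^{(m)} < t_1^{(m)} < … < t_{n_m}^{(m)} = T whose mesh max_k (t_{k+1}^{(m)} − t_k^{(m)}) tends to 0 as m → ∞, the left Riemann sums Σ_{k=0}^{n_m − 1} 2 (x(t_k^{(m)}) − x(s)) (x(t_{k+1}^{(m)}) − x(t_k^{(m)})) converge to (x(T) − x(s))². -/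

import Mathlib

open Real Filter Set

theorem riemann_sums_square_identity
    (s T : ℝ) (hsT : s < T) (γ : ℝ) (hγ : γ ∈ Set.Ioc (1/2 : ℝ) 1)
    (x : ℝ → ℝ) (C : ℝ) (hC : 0 ≤ C)
    (hx : ∀ u ∈ Set.Icc s T, ∀ v ∈ Set.Icc s T, |x u - x v| ≤ C * |u - v| ^ γ)
    (n : ℕ → ℕ) (t : ℕ → ℕ → ℝ)
    (ht0 : ∀ m, t m 0 = s) (htn : ∀ m, t m (n m) = T)
    (hmono : ∀ m, ∀ k < n m, t m k < t m (k + 1))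
    (hmesh : ∀ ε > 0, ∃ M, ∀ m ≥ M, ∀ k < n m, t m (k + 1) - t m k < ε) :
    Tendsto
      (fun m => ∑ k ∈ Finset.range (n m),
        2 * (x (t m k) - x s) * (x (t m (k + 1)) - x (t m k)))
      atTop (nhds ((x T - x s)^2)) := by
  obtain ⟨hγ1, hγ2⟩ := hγ
  have hγpos : 0 < 2 * γ - 1 := by linarith
  have hmono' : ∀ m k l, k ≤ l → l ≤ n m → t m k ≤ t m l := by
    intro m k l hkl hl
    induction l, hkl using Nat.le_induction with
    | base => exact le_rfl
    | succ l hkl ih =>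
      exact le_trans (ih (by omega)) (le_of_lt (hmono m l (by omega)))
  have hmem : ∀ m k, k ≤ n m → t m k ∈ Set.Icc s T := by
    intro m k hk
    constructor
    · rw [← ht0 m]; exact hmono' m 0 k (Nat.zero_le _) hk
    · rw [← htn m]; exact hmono' m k (n m) hk le_rfl
  set S : ℕ → ℝ := fun m => ∑ k ∈ Finset.range (n m),
      (x (t m (k+1)) - x (t m k))^2 with hS
  have key : ∀ m, (∑ k ∈ Finset.range (n m),
        2 * (x (t m k) - x s) * (x (t m (k + 1)) - x (t m k)))
      = (x T - x s)^2 - S m := by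
    intro m
    have h1 : ∑ k ∈ Finset.range (n m),
        ((x (t m (k+1)) - x s)^2 - (x (t m k) - x s)^2)
        = (x T - x s)^2 - (x s - x s)^2 := by
      rw [Finset.sum_range_sub (fun k => (x (t m k) - x s)^2), htn, ht0]
    have h2 : ∀ k, 2 * (x (t m k) - x s) * (x (t m (k + 1)) - x (t m k))
        = ((x (t m (k+1)) - x s)^2 - (x (t m k) - x s)^2)
          - (x (t m (k+1)) - x (t m k))^2 := by
      intro k; ring
    simp only [h2, Finset.sum_sub_distrib, h1, hS]
    ring
  have hS0 : Tendsto S atTop (nhds 0) := by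
    rw [Metric.tendsto_atTop]
    intro ε hε
    set A := C^2 * (T - s) + 1 with hA
    have hApos : 0 < A := by nlinarith [sq_nonneg C]
    have hεA : 0 < ε / A := div_pos hε hApos
    set δ := (ε / A) ^ ((2*γ - 1)⁻¹) with hδ
    have hδpos : 0 < δ := Real.rpow_pos_of_pos hεA _
    have hδpow : δ ^ (2*γ - 1) = ε / A := by
      rw [hδ, ← Real.rpow_mul hεA.le, inv_mul_cancel₀ hγpos.ne', Real.rpow_one]
    obtain ⟨M, hM⟩ := hmesh δ hδpos
    refine ⟨M, fun m hm => ?_⟩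
    have hterm : ∀ k ∈ Finset.range (n m),
        (x (t m (k+1)) - x (t m k))^2 ≤ C^2 * (ε / A) * (t m (k+1) - t m k) := by
      intro k hk
      rw [Finset.mem_range] at hk
      have hΔpos : 0 < t m (k+1) - t m k := sub_pos.mpr (hmono m k hk)
      have hΔδ : t m (k+1) - t m k < δ := hM m hm k hk
      have hxb : |x (t m (k+1)) - x (t m k)| ≤ C * (t m (k+1) - t m k) ^ γ := by
        have := hx (t m (k+1)) (hmem m (k+1) hk) (t m k) (hmem m k hk.le)
        rwa [abs_of_pos hΔpos] at this
      have h1 : (x (t m (k+1)) - x (t m k))^2 ≤ (C * (t m (k+1) - t m k) ^ γ)^2 := by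
        rw [← sq_abs]
        exact pow_le_pow_left₀ (abs_nonneg _) hxb 2
      have h2 : (C * (t m (k+1) - t m k) ^ γ)^2
          = C^2 * ((t m (k+1) - t m k) ^ (2*γ - 1) * (t m (k+1) - t m k)) := by
        have : ((t m (k+1) - t m k) ^ γ)^2
            = (t m (k+1) - t m k) ^ (2*γ - 1) * (t m (k+1) - t m k) := by
          rw [sq, ← Real.rpow_add hΔpos, show γ + γ = 2*γ - 1 + 1 by ring,
            Real.rpow_add hΔpos, Real.rpow_one]
        rw [mul_pow, this]
      have h3 : (t m (k+1) - t m k) ^ (2*γ - 1) ≤ ε / A := by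
        rw [← hδpow]
        exact Real.rpow_le_rpow hΔpos.le hΔδ.le hγpos.le
      calc (x (t m (k+1)) - x (t m k))^2 ≤ (C * (t m (k+1) - t m k) ^ γ)^2 := h1
        _ = C^2 * ((t m (k+1) - t m k) ^ (2*γ - 1) * (t m (k+1) - t m k)) := h2
        _ ≤ C^2 * ((ε / A) * (t m (k+1) - t m k)) := by
            apply mul_le_mul_of_nonneg_left _ (sq_nonneg C)
            exact mul_le_mul_of_nonneg_right h3 hΔpos.le
        _ = C^2 * (ε / A) * (t m (k+1) - t m k) := by ring
    have hSle : S m ≤ C^2 * (ε / A) * (T - s) := by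
      calc S m ≤ ∑ k ∈ Finset.range (n m), C^2 * (ε / A) * (t m (k+1) - t m k) :=
            Finset.sum_le_sum hterm
        _ = C^2 * (ε / A) * ∑ k ∈ Finset.range (n m), (t m (k+1) - t m k) := by
            rw [Finset.mul_sum]
        _ = C^2 * (ε / A) * (T - s) := by
            rw [Finset.sum_range_sub (fun k => t m k), htn, ht0]
    have hSnonneg : 0 ≤ S m := Finset.sum_nonneg fun k _ => sq_nonneg _
    rw [Real.dist_eq, sub_zero, abs_of_nonneg hSnonneg]
    have hlt : C^2 * (ε / A) * (T - s) < ε := by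
      have h1 : C^2 * (T - s) < A := by rw [hA]; linarith
      calc C^2 * (ε / A) * (T - s) = (C^2 * (T - s) / A) * ε := by ring
        _ < 1 * ε := by
            apply mul_lt_mul_of_pos_right _ hε
            exact (div_lt_one hApos).mpr h1
        _ = ε := one_mul ε
    exact lt_of_le_of_lt hSle hlt
  simp only [key]
  simpa using tendsto_const_nhds.sub hS0
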